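/- For all β > 0, γ > 0 and integers n, m ≥ 2, the function D(d,δ) = L1(n,d)·M1(m,δ)·(L1(n,d)·L3(n,d) − L2(n,d)²)·(M1(m,δ)·M3(m,δ) − M2(m,δ)²) is strictly monotone increasing in d > 0 for each fixed δ > 0, and strictly monotone increasing in δ > 0 for each fixed d > 0. -/

import Mathlib

open Real Filter

/-- Entry `L1` of the Fisher information matrix for an equidistant design with
`n` points and step size `d`, covariance parameter `β`. -/
noncomputable def L1 (β : ℝ) (n : ℕ) (d : ℝ) : ℝ :=
  (2 - (n : ℝ) + n * exp (β * d)) / (exp (β * d) + 1)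

/-- Entry `L2` of the Fisher information matrix. -/
noncomputable def L2 (β : ℝ) (n : ℕ) (d : ℝ) : ℝ :=
  d * ((n : ℝ) - 1) / 2 * L1 β n d

/-- Entry `L3` of the Fisher information matrix. -/
noncomputable def L3 (β : ℝ) (n : ℕ) (d : ℝ) : ℝ :=
  d ^ 2 * ((n : ℝ) - 1) / (exp (2 * β * d) - 1) *
    ((n : ℝ) * (2 * n - 1) * (exp (β * d) - 1) ^ 2 / 6 + n * (exp (β * d) - 1) + 1)
/-- Determinant of the Fisher information matrix for the Ornstein–Uhlenbeck
sheet model on the directionally equidistant grid with `n` points of step `d`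
(parameter `β`) and `m` points of step `δ` (parameter `γ`):
`D(d,δ) = L1·M1·(L1·L3 − L2²)·(M1·M3 − M2²)`, where `Mi = Li` with `γ, m, δ`. -/
noncomputable def Dsheet (β γ : ℝ) (n m : ℕ) (d δ : ℝ) : ℝ :=
  L1 β n d * L1 γ m δ * (L1 β n d * L3 β n d - L2 β n d ^ 2) *
    (L1 γ m δ * L3 γ m δ - L2 γ m δ ^ 2)

/-! ### Auxiliary material -/

/-- Key polynomial positivity: the "cleared" derivative polynomial `S(ν,u)` is
positive for `ν ≥ 2` and `u > 0`. -/
lemma ouS_pos (ν u : ℝ) (hν : 2 ≤ ν) (hu : 0 < u) :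
    0 < 2 * ((ν*u+2)^2 * (ν*(ν+1)*u^2 + 6*(ν+1)*u + 12)) * (u*(u+2)^3)
        + u*(u+1) * ((2*(ν*u+2)*ν*(ν*(ν+1)*u^2 + 6*(ν+1)*u + 12)
              + (ν*u+2)^2 * (2*ν*(ν+1)*u + 6*(ν+1))) * (u*(u+2)^3)
            - ((ν*u+2)^2 * (ν*(ν+1)*u^2 + 6*(ν+1)*u + 12)) * ((u+2)^3 + 3*u*(u+2)^2)) := by
  obtain ⟨a, ha, rfl⟩ : ∃ a, 0 ≤ a ∧ ν = a + 2 := ⟨ν - 2, by linarith, by ring⟩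
  have hring : 2 * (((a+2)*u+2)^2 * ((a+2)*((a+2)+1)*u^2 + 6*((a+2)+1)*u + 12)) * (u*(u+2)^3)
        + u*(u+1) * ((2*((a+2)*u+2)*(a+2)*((a+2)*((a+2)+1)*u^2 + 6*((a+2)+1)*u + 12)
              + ((a+2)*u+2)^2 * (2*(a+2)*((a+2)+1)*u + 6*((a+2)+1))) * (u*(u+2)^3)
            - (((a+2)*u+2)^2 * ((a+2)*((a+2)+1)*u^2 + 6*((a+2)+1)*u + 12)) * ((u+2)^3 + 3*u*(u+2)^2))
      = 384*u + 2304*u^2 + 1152*u^2*a + 5760*u^3 + 5376*u^3*a + 960*u^3*a^2 + 7776*u^4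
        + 10272*u^4*a + 3520*u^4*a^2 + 320*u^4*a^3 + 6120*u^5 + 10272*u^5*a + 5080*u^5*a^2
        + 880*u^5*a^3 + 40*u^5*a^4 + 2808*u^6 + 5664*u^6*a + 3600*u^6*a^2 + 888*u^6*a^3
        + 72*u^6*a^4 + 696*u^7 + 1632*u^7*a + 1250*u^7*a^2 + 388*u^7*a^3 + 42*u^7*a^4
        + 72*u^8 + 192*u^8*a + 170*u^8*a^2 + 62*u^8*a^3 + 8*u^8*a^4 := by ring
  rw [hring]
  linarith [hu, pow_pos hu 2, mul_nonneg (pow_nonneg hu.le 2) (pow_nonneg ha 1), pow_pos hu 3,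
    mul_nonneg (pow_nonneg hu.le 3) (pow_nonneg ha 1), mul_nonneg (pow_nonneg hu.le 3) (pow_nonneg ha 2),
    pow_pos hu 4, mul_nonneg (pow_nonneg hu.le 4) (pow_nonneg ha 1),
    mul_nonneg (pow_nonneg hu.le 4) (pow_nonneg ha 2), mul_nonneg (pow_nonneg hu.le 4) (pow_nonneg ha 3),
    pow_pos hu 5, mul_nonneg (pow_nonneg hu.le 5) (pow_nonneg ha 1),
    mul_nonneg (pow_nonneg hu.le 5) (pow_nonneg ha 2), mul_nonneg (pow_nonneg hu.le 5) (pow_nonneg ha 3),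
    mul_nonneg (pow_nonneg hu.le 5) (pow_nonneg ha 4), pow_pos hu 6,
    mul_nonneg (pow_nonneg hu.le 6) (pow_nonneg ha 1), mul_nonneg (pow_nonneg hu.le 6) (pow_nonneg ha 2),
    mul_nonneg (pow_nonneg hu.le 6) (pow_nonneg ha 3), mul_nonneg (pow_nonneg hu.le 6) (pow_nonneg ha 4),
    pow_pos hu 7, mul_nonneg (pow_nonneg hu.le 7) (pow_nonneg ha 1),
    mul_nonneg (pow_nonneg hu.le 7) (pow_nonneg ha 2), mul_nonneg (pow_nonneg hu.le 7) (pow_nonneg ha 3),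
    mul_nonneg (pow_nonneg hu.le 7) (pow_nonneg ha 4), pow_pos hu 8,
    mul_nonneg (pow_nonneg hu.le 8) (pow_nonneg ha 1), mul_nonneg (pow_nonneg hu.le 8) (pow_nonneg ha 2),
    mul_nonneg (pow_nonneg hu.le 8) (pow_nonneg ha 3), mul_nonneg (pow_nonneg hu.le 8) (pow_nonneg ha 4)]

/-- The explicit rational function equal to `L1·(L1·L3 − L2²)` on `d > 0`. -/
noncomputable def ouG (β ν : ℝ) (d : ℝ) : ℝ :=
  (ν-1)/12 * d^2 * ((ν*(exp (β*d)-1)+2)^2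
      * (ν*(ν+1)*(exp (β*d)-1)^2 + 6*(ν+1)*(exp (β*d)-1) + 12))
    / ((exp (β*d)-1) * (exp (β*d)-1+2)^3)

lemma ouG_hasDerivAt (β ν d : ℝ) (hE : 1 < exp (β*d)) :
    HasDerivAt (ouG β ν)
      ((ν-1)/12 * d * (2 * ((ν*(exp (β*d)-1)+2)^2
            * (ν*(ν+1)*(exp (β*d)-1)^2 + 6*(ν+1)*(exp (β*d)-1) + 12))
            * ((exp (β*d)-1)*((exp (β*d)-1)+2)^3)
          + d*β*exp (β*d) * ((2*(ν*(exp (β*d)-1)+2)*ν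
                * (ν*(ν+1)*(exp (β*d)-1)^2 + 6*(ν+1)*(exp (β*d)-1) + 12)
              + (ν*(exp (β*d)-1)+2)^2 * (2*ν*(ν+1)*(exp (β*d)-1) + 6*(ν+1)))
              * ((exp (β*d)-1)*((exp (β*d)-1)+2)^3)
            - ((ν*(exp (β*d)-1)+2)^2
                * (ν*(ν+1)*(exp (β*d)-1)^2 + 6*(ν+1)*(exp (β*d)-1) + 12))
              * (((exp (β*d)-1)+2)^3 + 3*(exp (β*d)-1)*((exp (β*d)-1)+2)^2)))
        / ((exp (β*d)-1) * ((exp (β*d)-1)+2)^3)^2) d := by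
  have hu0 : 0 < exp (β*d) - 1 := by linarith
  have hBne : (exp (β*d)-1) * (exp (β*d)-1+2)^3 ≠ 0 := by positivity
  have hExp : HasDerivAt (fun x : ℝ => exp (β*x)) (exp (β*d) * β) d := by
    simpa using (((hasDerivAt_id d).const_mul β).exp)
  have hu : HasDerivAt (fun x : ℝ => exp (β*x) - 1) (exp (β*d) * β) d := hExp.sub_const 1
  have h1 : HasDerivAt (fun x : ℝ => ν*(exp (β*x)-1)+2) (ν * (exp (β*d) * β)) d :=
    (hu.const_mul ν).add_const 2
  have h1sq := h1.pow 2
  have hP : HasDerivAt (fun x : ℝ => ν*(ν+1)*(exp (β*x)-1)^2 + 6*(ν+1)*(exp (β*x)-1) + 12)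
      (ν*(ν+1) * ((2:ℕ) * (exp (β*d)-1)^(2-1) * (exp (β*d) * β))
        + 6*(ν+1) * (exp (β*d) * β)) d :=
    (((hu.pow 2).const_mul (ν*(ν+1))).add (hu.const_mul (6*(ν+1)))).add_const 12
  have hN := h1sq.mul hP
  have hA := ((hasDerivAt_pow 2 d).const_mul ((ν-1)/12)).mul hN
  have hB := hu.mul ((hu.add_const 2).pow 3)
  have hG := hA.div hB hBne
  convert hG using 1
  · rfl
  · rfl
  · rfl
  have h21 : (2:ℕ) - 1 = 1 := rfl
  have h31 : (3:ℕ) - 1 = 2 := rfl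
  rw [h21, h31]
  push_cast
  simp only [Pi.mul_apply, Pi.pow_apply, Pi.div_apply]
  ring

lemma ouG_deriv_pos (β ν d : ℝ) (hβ : 0 < β) (hν : 2 ≤ ν) (hd : 0 < d) :
    0 < (ν-1)/12 * d * (2 * ((ν*(exp (β*d)-1)+2)^2
            * (ν*(ν+1)*(exp (β*d)-1)^2 + 6*(ν+1)*(exp (β*d)-1) + 12))
            * ((exp (β*d)-1)*((exp (β*d)-1)+2)^3)
          + d*β*exp (β*d) * ((2*(ν*(exp (β*d)-1)+2)*ν
                * (ν*(ν+1)*(exp (β*d)-1)^2 + 6*(ν+1)*(exp (β*d)-1) + 12)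
              + (ν*(exp (β*d)-1)+2)^2 * (2*ν*(ν+1)*(exp (β*d)-1) + 6*(ν+1)))
              * ((exp (β*d)-1)*((exp (β*d)-1)+2)^3)
            - ((ν*(exp (β*d)-1)+2)^2
                * (ν*(ν+1)*(exp (β*d)-1)^2 + 6*(ν+1)*(exp (β*d)-1) + 12))
              * (((exp (β*d)-1)+2)^3 + 3*(exp (β*d)-1)*((exp (β*d)-1)+2)^2)))
        / ((exp (β*d)-1) * ((exp (β*d)-1)+2)^3)^2 := by
  have hbd : 0 < β * d := mul_pos hβ hd
  have hE : 1 < exp (β*d) := by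
    rw [← Real.exp_zero]; exact Real.exp_lt_exp.mpr hbd
  set u : ℝ := exp (β*d) - 1 with hudef
  have hu : 0 < u := by simp only [hudef]; linarith
  have hEu : exp (β*d) = u + 1 := by simp [hudef]
  have hdu : β * d ≤ u := by
    have := Real.add_one_le_exp (β*d); simp only [hudef]; linarith
  have hNpos : 0 < (ν*u+2)^2 * (ν*(ν+1)*u^2 + 6*(ν+1)*u + 12) := by
    have h1 : 0 < ν*u+2 := by nlinarith
    have h2 : 0 < ν*(ν+1)*u^2 + 6*(ν+1)*u + 12 := by nlinarith
    positivity
  have hDpos : 0 < u*(u+2)^3 := by positivity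
  set W : ℝ := (2*(ν*u+2)*ν * (ν*(ν+1)*u^2 + 6*(ν+1)*u + 12)
      + (ν*u+2)^2 * (2*ν*(ν+1)*u + 6*(ν+1))) * (u*(u+2)^3)
    - ((ν*u+2)^2 * (ν*(ν+1)*u^2 + 6*(ν+1)*u + 12)) * ((u+2)^3 + 3*u*(u+2)^2) with hWdef
  have hS : 0 < 2 * ((ν*u+2)^2 * (ν*(ν+1)*u^2 + 6*(ν+1)*u + 12)) * (u*(u+2)^3)
      + u*(u+1) * W := by
    rw [hWdef]; exact ouS_pos ν u hν hu
  have hK : 0 < 2 * ((ν*u+2)^2 * (ν*(ν+1)*u^2 + 6*(ν+1)*u + 12)) * (u*(u+2)^3)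
      + d*β*exp (β*d) * W := by
    rcases le_or_gt 0 W with hW | hW
    · have h1 : 0 ≤ d*β*exp (β*d) * W :=
        mul_nonneg (by positivity) hW
      nlinarith [mul_pos hNpos hDpos]
    · have h1 : u*(u+1) * W ≤ d*β*exp (β*d) * W := by
        rw [hEu]
        have h2 : d*β*(u+1) ≤ u*(u+1) := by
          have : d*β ≤ u := by rw [mul_comm]; exact hdu
          nlinarith
        nlinarith
      linarith
  have hnum : 0 < (ν-1)/12 * d := by
    have : 0 < ν - 1 := by linarith
    positivity
  rw [hEu] at hK
  rw [hEu]
  exact div_pos (mul_pos hnum hK) (by positivity)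

lemma ouG_strictMono (β ν : ℝ) (hβ : 0 < β) (hν : 2 ≤ ν) :
    StrictMonoOn (ouG β ν) (Set.Ioi 0) := by
  have hE : ∀ d : ℝ, d ∈ Set.Ioi (0:ℝ) → 1 < exp (β*d) := fun d hd => by
    rw [← Real.exp_zero]; exact Real.exp_lt_exp.mpr (mul_pos hβ hd)
  apply strictMonoOn_of_deriv_pos (convex_Ioi 0)
  · intro d hd
    exact ((ouG_hasDerivAt β ν d (hE d hd)).continuousAt).continuousWithinAt
  · intro d hd
    rw [interior_Ioi] at hd
    rw [(ouG_hasDerivAt β ν d (hE d hd)).deriv]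
    exact ouG_deriv_pos β ν d hβ hν hd

/-- On `d > 0`, the factor `L1·(L1·L3 − L2²)` equals the explicit rational
function `ouG`. -/
lemma ouF_eq_ouG (β : ℝ) (hβ : 0 < β) (n : ℕ) (d : ℝ) (hd : 0 < d) :
    L1 β n d * (L1 β n d * L3 β n d - L2 β n d ^ 2) = ouG β (n : ℝ) d := by
  have hE : 1 < exp (β*d) := by
    rw [← Real.exp_zero]; exact Real.exp_lt_exp.mpr (mul_pos hβ hd)
  have h2 : exp (2*β*d) = exp (β*d) * exp (β*d) := by
    rw [← Real.exp_add]; congr 1; ring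
  have h1 : exp (β*d) + 1 ≠ 0 := by positivity
  have h3 : exp (β*d) - 1 ≠ 0 := ne_of_gt (by linarith)
  have h4 : exp (β*d) * exp (β*d) - 1 ≠ 0 := ne_of_gt (by nlinarith)
  have h5 : exp (β*d) - 1 + 2 ≠ 0 := ne_of_gt (by linarith)
  simp only [L1, L2, L3, ouG]
  rw [h2]
  have h4' : exp (β*d) ^ 2 - 1 ≠ 0 := by rw [sq]; exact h4
  field_simp
  ring

lemma ouF_pos (β : ℝ) (hβ : 0 < β) (n : ℕ) (hn : 2 ≤ n) (d : ℝ) (hd : 0 < d) :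
    0 < L1 β n d * (L1 β n d * L3 β n d - L2 β n d ^ 2) := by
  have hν : (2:ℝ) ≤ (n:ℝ) := by exact_mod_cast hn
  rw [ouF_eq_ouG β hβ n d hd]
  have hE : 1 < exp (β*d) := by
    rw [← Real.exp_zero]; exact Real.exp_lt_exp.mpr (mul_pos hβ hd)
  set u : ℝ := exp (β*d) - 1 with hudef
  have hu : 0 < u := by simp only [hudef]; linarith
  unfold ouG
  have h1 : 0 < (n:ℝ)*u+2 := by nlinarith
  have h2 : 0 < (n:ℝ)*((n:ℝ)+1)*u^2 + 6*((n:ℝ)+1)*u + 12 := by nlinarith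
  have h3 : 0 < ((n:ℝ)-1)/12 := by linarith
  rw [← hudef]
  exact div_pos (mul_pos (mul_pos h3 (by positivity : (0:ℝ) < d^2))
    (mul_pos (pow_pos h1 2) h2)) (by positivity : (0:ℝ) < u*(u+2)^3)

lemma ouF_strictMono (β : ℝ) (hβ : 0 < β) (n : ℕ) (hn : 2 ≤ n) :
    StrictMonoOn (fun d => L1 β n d * (L1 β n d * L3 β n d - L2 β n d ^ 2)) (Set.Ioi 0) := by
  have hν : (2:ℝ) ≤ (n:ℝ) := by exact_mod_cast hn
  intro a ha b hb hab
  simp only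
  rw [ouF_eq_ouG β hβ n a ha, ouF_eq_ouG β hβ n b hb]
  exact ouG_strictMono β (n:ℝ) hβ hν ha hb hab

/-- `D(d,δ)` is strictly monotone increasing in `d` for each fixed `δ > 0`,
and strictly monotone increasing in `δ` for each fixed `d > 0`. -/
theorem Dsheet_strictMono (β γ : ℝ) (hβ : 0 < β) (hγ : 0 < γ)
    (n m : ℕ) (hn : 2 ≤ n) (hm : 2 ≤ m) :
    (∀ δ > (0 : ℝ), StrictMonoOn (fun d => Dsheet β γ n m d δ) (Set.Ioi 0)) ∧
    (∀ d > (0 : ℝ), StrictMonoOn (fun δ => Dsheet β γ n m d δ) (Set.Ioi 0)) := by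
  have hfact : ∀ d δ : ℝ, Dsheet β γ n m d δ
      = (L1 β n d * (L1 β n d * L3 β n d - L2 β n d ^ 2))
        * (L1 γ m δ * (L1 γ m δ * L3 γ m δ - L2 γ m δ ^ 2)) := by
    intro d δ; unfold Dsheet; ring
  constructor
  · intro δ hδ a ha b hb hab
    have hC : 0 < L1 γ m δ * (L1 γ m δ * L3 γ m δ - L2 γ m δ ^ 2) := ouF_pos γ hγ m hm δ hδ
    have h := ouF_strictMono β hβ n hn ha hb hab
    simp only at h ⊢
    rw [hfact a δ, hfact b δ]
    exact mul_lt_mul_of_pos_right h hC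
  · intro d hd a ha b hb hab
    have hC : 0 < L1 β n d * (L1 β n d * L3 β n d - L2 β n d ^ 2) := ouF_pos β hβ n hn d hd
    have h := ouF_strictMono γ hγ m hm ha hb hab
    simp only at h ⊢
    rw [hfact d a, hfact d b]
    exact mul_lt_mul_of_pos_left h hC
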